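/- For fixed t and k, the limit as n → ∞ of the ratio [number of k_t-Dyck paths of length (k+1)n] / [ ((t+1)/((k+1)n+t+1)) binom((k+1)n+t+1, n) ] equals sum over 0 ≤ ℓ ≤ t/k of binom(t-kℓ, ℓ) * (-ρ)^ℓ, where ρ = k^k/(k+1)^(k+1). -/

import Mathlib

open Finset Filter

/-- The number of `k_t`-Dyck paths of length `L`. -/
def ktDyckCount (k t L : ℕ) : ℕ :=
  (Finset.univ.filter (fun f : Fin L → Bool =>
    (∀ i : Fin L, -(t : ℤ) ≤ ∑ j ∈ Finset.univ.filter (· ≤ i),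
        (if f j then (1 : ℤ) else -(k : ℤ))) ∧
    (∑ j, (if f j then (1 : ℤ) else -(k : ℤ))) = 0)).card


noncomputable def phi (k : ℕ) (A B : ℤ) : ℝ :=
  if 0 ≤ B ∧ B ≤ A ∧ ((k : ℤ) + 1) ∣ (A - B) then
    ((B : ℝ) + 1) / ((A : ℝ) + 1) * (((A + 1).toNat.choose ((A - B) / ((k : ℤ) + 1)).toNat : ℕ) : ℝ)
  else 0

lemma phi_neg_B {k : ℕ} {A B : ℤ} (h : B < 0) : phi k A B = 0 := by
  rw [phi, if_neg]; rintro ⟨h1, -⟩; omega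

lemma phi_gt {k : ℕ} {A B : ℤ} (h : A < B) : phi k A B = 0 := by
  rw [phi, if_neg]; rintro ⟨-, h1, -⟩; omega

lemma phi_not_dvd {k : ℕ} {A B : ℤ} (h : ¬ ((k : ℤ) + 1) ∣ (A - B)) : phi k A B = 0 := by
  rw [phi, if_neg]; rintro ⟨-, -, h1⟩; exact h h1

lemma phi_eval {k : ℕ} {A B d : ℤ} (hB : 0 ≤ B) (hBA : B ≤ A)
    (hd : A - B = ((k : ℤ) + 1) * d) :
    phi k A B = ((B : ℝ) + 1) / ((A : ℝ) + 1) * (((A + 1).toNat.choose d.toNat : ℕ) : ℝ) := by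
  have hk1 : ((k : ℤ) + 1) ≠ 0 := by positivity
  rw [phi, if_pos ⟨hB, hBA, ⟨d, hd⟩⟩, hd, Int.mul_ediv_cancel_left _ hk1]

lemma phi_self {k : ℕ} {B : ℤ} (hB : 0 ≤ B) : phi k B B = 1 := by
  rw [phi_eval hB le_rfl (d := 0) (by ring)]
  have h1 : (0:ℝ) < (B:ℝ) + 1 := by positivity
  simp [Nat.choose_zero_right, div_mul_cancel₀, h1.ne']

lemma phi_pascal {k : ℕ} (hk : 0 < k) (A B : ℤ) (hB : 0 ≤ B) :
    phi k A B = phi k (A - 1) (B - 1) + phi k (A - 1) (B + k)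
      + (if A = 0 ∧ B = 0 then 1 else 0) := by
  rcases lt_trichotomy A 0 with hA | hA | hA
  · rw [phi_gt (by omega), phi_gt (by omega), phi_gt (by omega), if_neg (by omega)]
    ring
  · subst hA
    rcases eq_or_lt_of_le hB with hB0 | hB1
    · subst hB0
      rw [phi_self le_rfl, phi_neg_B (by omega), phi_gt (by omega), if_pos ⟨rfl, rfl⟩]
      ring
    · rw [phi_gt (by omega), phi_gt (by omega), phi_gt (by omega), if_neg (by omega)]
      ring
  · rw [if_neg (by omega)]
    by_cases hdvd : ((k : ℤ) + 1) ∣ (A - B)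
    swap
    · rw [phi_not_dvd hdvd,
        phi_not_dvd (by rw [show A - 1 - (B - 1) = A - B from by ring]; exact hdvd),
        phi_not_dvd (by rintro ⟨e, he⟩; exact hdvd ⟨e + 1, by linarith⟩)]
      ring
    by_cases hBA : B ≤ A
    swap
    · rw [phi_gt (by omega), phi_gt (by omega), phi_gt (by omega)]; ring
    -- main case
    obtain ⟨d, hd⟩ := hdvd
    have hd0 : 0 ≤ d := by
      by_contra h
      push_neg at h
      nlinarith [hd]
    rcases eq_or_lt_of_le hd0 with hdz | hd1
    · -- d = 0, A = B ≥ 1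
      have hAB : A = B := by
        have : ((k:ℤ)+1) * d = 0 := by rw [← hdz]; ring
        omega
      subst hAB
      rw [phi_self hB, phi_self (by omega), phi_gt (by omega)]
      ring
    · -- d ≥ 1
      have hstep : B + ((k:ℤ) + 1) ≤ A := by
        have h2 := mul_le_mul_of_nonneg_left (show (1:ℤ) ≤ d from hd1) (show (0:ℤ) ≤ (k:ℤ)+1 by positivity)
        linarith [hd, h2]
      obtain ⟨a, rfl⟩ := Int.eq_ofNat_of_zero_le (show (0:ℤ) ≤ A by omega)
      obtain ⟨b, rfl⟩ := Int.eq_ofNat_of_zero_le hB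
      obtain ⟨dd, rfl⟩ := Int.eq_ofNat_of_zero_le hd0
      have ha1 : 1 ≤ a := by exact_mod_cast hA
      have hdd1 : (1:ℕ) ≤ dd := by exact_mod_cast hd1
      have hrelR : (a:ℝ) - b = ((k:ℝ)+1) * dd := by exact_mod_cast hd
      rw [phi_eval hB hBA hd,
          phi_eval (B := (b:ℤ) + k) (d := (dd : ℤ) - 1) (by positivity) (by omega)
            (by push_cast; linear_combination hd)]
      have ht1 : ((a:ℤ) + 1).toNat = a + 1 := by omega
      have ht2 : ((a:ℤ) - 1 + 1).toNat = a := by omega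
      have ht3 : ((dd:ℤ)).toNat = dd := by omega
      have ht4 : ((dd:ℤ) - 1).toNat = dd - 1 := by omega
      rw [ht1, ht2, ht3, ht4]
      have hterm1 : phi k ((a:ℤ) - 1) ((b:ℤ) - 1)
          = (b : ℝ) / (a : ℝ) * ((a.choose dd : ℕ) : ℝ) := by
        rcases Nat.eq_zero_or_pos b with hb0 | hb1
        · subst hb0; rw [phi_neg_B (by omega)]; simp
        · rw [phi_eval (B := (b:ℤ) - 1) (d := (dd : ℤ)) (by omega) (by omega)
              (by push_cast; linear_combination hd), ht2, ht3]
          push_cast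
          ring
      rw [hterm1]
      have hdle : dd ≤ a := by
        have : (dd : ℤ) ≤ a := by nlinarith [hd]
        exact_mod_cast this
      have h1 : ((a.choose dd : ℕ) : ℝ) * ((a:ℝ) + 1) = ((a+1).choose dd : ℕ) * ((a:ℝ) + 1 - dd) := by
        have h := congrArg (fun z : ℕ => (z : ℝ)) (Nat.choose_mul_succ_eq a dd)
        push_cast [Nat.cast_sub (by omega : dd ≤ a + 1)] at h
        linarith [h]
      have h2 : ((a:ℝ) + 1) * ((a.choose (dd - 1) : ℕ) : ℝ) = ((a+1).choose dd : ℕ) * (dd : ℝ) := by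
        have h := Nat.add_one_mul_choose_eq a (dd - 1)
        rw [Nat.sub_add_cancel hdd1] at h
        have hc := congrArg (fun z : ℕ => (z : ℝ)) h
        push_cast at hc
        linarith [hc]
      have ha0 : (a:ℝ) ≠ 0 := Nat.cast_ne_zero.mpr (by omega)
      have ha10 : (a:ℝ) + 1 ≠ 0 := by positivity
      have key : ((b:ℝ)+1) * (a:ℝ) * (((a+1).choose dd : ℕ):ℝ)
          = ((a:ℝ)+1) * ((b:ℝ) * ((a.choose dd : ℕ):ℝ) + ((b:ℝ)+(k:ℝ)+1) * ((a.choose (dd-1) : ℕ):ℝ)) := by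
        linear_combination (-(b:ℝ)) * h1 + (-((b:ℝ)+(k:ℝ)+1)) * h2 + (((a+1).choose dd : ℕ):ℝ) * hrelR
      push_cast
      rw [show (a:ℝ) - 1 + 1 = (a:ℝ) from by ring, div_mul_eq_mul_div, div_mul_eq_mul_div,
        div_mul_eq_mul_div, ← add_div, add_zero, div_eq_div_iff ha10 ha0]
      linear_combination key

noncomputable def Xs (k t : ℕ) (s j : ℕ) : ℝ :=
  ∑ ℓ ∈ Finset.range (t / k + 1),
    (-1 : ℝ)^ℓ * ((t - k * ℓ).choose ℓ : ℝ) * phi k ((s:ℤ) - ((k:ℤ)+1) * ℓ) ((s:ℤ) - ((k:ℤ)+1) * j)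

lemma Xs_zero_right (k t s : ℕ) : Xs k t s 0 = 1 := by
  rw [Xs, Finset.sum_eq_single 0]
  · simp [phi_self (show (0:ℤ) ≤ (s:ℤ) by positivity)]
  · intro b _ hb
    rw [phi_gt, mul_zero]
    have hb1 : (1:ℤ) ≤ (b:ℤ) := by exact_mod_cast Nat.one_le_iff_ne_zero.mpr hb
    have hmul : ((k:ℤ)+1) * 1 ≤ ((k:ℤ)+1) * b := by
      apply mul_le_mul_of_nonneg_left hb1 (by positivity)
    simp only [Nat.cast_zero, mul_zero, sub_zero]
    linarith
  · intro h
    exact absurd (Finset.mem_range.mpr (Nat.succ_pos _)) h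

lemma Xs_lt (k t s j : ℕ) (h : (s:ℤ) < ((k:ℤ)+1) * j) : Xs k t s j = 0 := by
  rw [Xs]
  apply Finset.sum_eq_zero
  intro ℓ _
  rw [phi_neg_B (by omega), mul_zero]

lemma Xs_rec (k t : ℕ) (hk : 0 < k) (s j : ℕ) (hj1 : 1 ≤ j) (hj : (k+1) * j ≤ s + 1)
    (hjr : j ≤ t / k) :
    Xs k t (s+1) j = Xs k t s j + Xs k t s (j-1)
      + (if (k+1)*j = s+1 then (-1:ℝ)^j * ((t - k*j).choose j : ℝ) else 0) := by
  have hjZ : ((k:ℤ)+1) * (j:ℤ) ≤ (s:ℤ) + 1 := by exact_mod_cast hj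
  have hBpos : (0:ℤ) ≤ ((s:ℤ)+1) - ((k:ℤ)+1) * j := by linarith
  have hterm : ∀ ℓ ∈ Finset.range (t / k + 1),
      (-1 : ℝ)^ℓ * ((t - k * ℓ).choose ℓ : ℝ) * phi k (((s+1:ℕ):ℤ) - ((k:ℤ)+1) * ℓ) (((s+1:ℕ):ℤ) - ((k:ℤ)+1) * j)
      = (-1 : ℝ)^ℓ * ((t - k * ℓ).choose ℓ : ℝ) * phi k ((s:ℤ) - ((k:ℤ)+1) * ℓ) ((s:ℤ) - ((k:ℤ)+1) * j)
      + (-1 : ℝ)^ℓ * ((t - k * ℓ).choose ℓ : ℝ) * phi k ((s:ℤ) - ((k:ℤ)+1) * ℓ) ((s:ℤ) - ((k:ℤ)+1) * ((j-1:ℕ):ℤ))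
      + (if ℓ = j ∧ (k+1)*j = s+1 then (-1:ℝ)^ℓ * ((t - k*ℓ).choose ℓ : ℝ) else 0) := by
    intro ℓ _
    have hp := phi_pascal (k := k) hk (((s+1:ℕ):ℤ) - ((k:ℤ)+1) * ℓ) (((s+1:ℕ):ℤ) - ((k:ℤ)+1) * j)
      (by push_cast; linarith)
    have e1 : ((s+1:ℕ):ℤ) - ((k:ℤ)+1) * ℓ - 1 = (s:ℤ) - ((k:ℤ)+1) * ℓ := by push_cast; ring
    have e2 : ((s+1:ℕ):ℤ) - ((k:ℤ)+1) * j - 1 = (s:ℤ) - ((k:ℤ)+1) * j := by push_cast; ring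
    have e3 : ((s+1:ℕ):ℤ) - ((k:ℤ)+1) * j + k = (s:ℤ) - ((k:ℤ)+1) * ((j-1:ℕ):ℤ) := by
      have : ((j-1:ℕ):ℤ) = (j:ℤ) - 1 := by omega
      rw [this]; push_cast; ring
    rw [e1, e2, e3] at hp
    rw [hp]
    have hif : (((s+1:ℕ):ℤ) - ((k:ℤ)+1) * ℓ = 0 ∧ ((s+1:ℕ):ℤ) - ((k:ℤ)+1) * j = 0)
        ↔ (ℓ = j ∧ (k+1)*j = s+1) := by
      constructor
      · rintro ⟨h1, h2⟩
        have hPQ : ((k:ℤ)+1) * ℓ = ((k:ℤ)+1) * j := by push_cast at h1 h2 ⊢; linarith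
        have hlj : (ℓ:ℤ) = (j:ℤ) := mul_left_cancel₀ (by positivity) hPQ
        have h2' : ((k+1)*j : ℕ) = ((s+1 : ℕ)) := by
          have : ((k:ℤ)+1) * j = ((s+1:ℕ):ℤ) := by linarith
          exact_mod_cast this
        exact ⟨by exact_mod_cast hlj, h2'⟩
      · rintro ⟨rfl, h2⟩
        have h2' : ((k:ℤ)+1) * ℓ = ((s+1:ℕ):ℤ) := by exact_mod_cast h2
        constructor <;> linarith
    by_cases hcond : ℓ = j ∧ (k+1)*j = s+1
    · rw [if_pos ((by simpa [eq_iff_iff] using hif : _ ↔ _).mpr hcond), if_pos hcond]; ring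
    · rw [if_neg (fun hc => hcond (hif.mp hc)), if_neg hcond]; ring
  rw [Xs, Finset.sum_congr rfl hterm, Finset.sum_add_distrib, Finset.sum_add_distrib]
  congr 1
  by_cases hQ : (k+1)*j = s+1
  · rw [if_pos hQ]
    have : ∀ ℓ ∈ Finset.range (t/k+1), (if ℓ = j ∧ (k+1)*j = s+1 then (-1:ℝ)^ℓ * ((t - k*ℓ).choose ℓ : ℝ) else 0)
        = (if ℓ = j then (-1:ℝ)^ℓ * ((t - k*ℓ).choose ℓ : ℝ) else 0) := by
      intro ℓ _
      by_cases h : ℓ = j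
      · rw [if_pos ⟨h, hQ⟩, if_pos h]
      · rw [if_neg (fun hc => h hc.1), if_neg h]
    rw [Finset.sum_congr rfl this, Finset.sum_ite_eq' _ j, if_pos (Finset.mem_range.mpr (by omega))]
  · rw [if_neg hQ]
    apply Finset.sum_eq_zero
    intro ℓ _
    rw [if_neg (fun hc => hQ hc.2)]

lemma Xs_formula (k t : ℕ) (hk : 0 < k) :
    ∀ s j : ℕ, (k+1) * j ≤ s → s ≤ t →
      Xs k t s j = (-1:ℝ)^j * ((t - s + j - 1).choose j : ℝ) := by
  intro s
  induction s with
  | zero =>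
    intro j hj _
    have hj0 : j = 0 := by
      rcases Nat.eq_zero_or_pos j with h | h
      · exact h
      · exfalso; nlinarith [hj]
    subst hj0
    simpa using Xs_zero_right k t 0
  | succ s IH =>
    intro j hj hst
    rcases Nat.eq_zero_or_pos j with hj0 | hj1
    · subst hj0
      simpa using Xs_zero_right k t (s+1)
    obtain ⟨j', rfl⟩ : ∃ j', j = j' + 1 := ⟨j - 1, by omega⟩
    have hkj : k * (j'+1) + (j'+1) ≤ s + 1 := by
      have : (k+1) * (j'+1) = k*(j'+1) + (j'+1) := by ring
      omega
    have hjr : j' + 1 ≤ t / k := by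
      rw [Nat.le_div_iff_mul_le hk]
      have h1 : (j'+1) * k = k * (j'+1) := by ring
      omega
    rw [Xs_rec k t hk s (j'+1) (by omega) hj hjr]
    have hsub : j' + 1 - 1 = j' := by omega
    rw [hsub]
    rcases eq_or_lt_of_le hj with hbd | hlt
    · -- boundary : (k+1)*(j'+1) = s+1
      have hXlt : Xs k t s (j'+1) = 0 := by
        apply Xs_lt
        have : ((k+1) * (j'+1) : ℕ) = (s+1 : ℕ) := hbd
        have hz : ((k:ℤ)+1) * ((j'+1:ℕ):ℤ) = ((s+1:ℕ):ℤ) := by exact_mod_cast this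
        push_cast at hz ⊢
        linarith
      rw [hXlt, if_pos hbd]
      rcases Nat.eq_zero_or_pos j' with hj'0 | hj'1
      · -- j' = 0 : t - s + 0 - 1 and term Xs s 0 = 1
        subst hj'0
        rw [Xs_zero_right]
        -- goal : (-1)^1 * C(t - (s+1) + 1 - 1, 1) = 0 + 1 + (-1)^1 * C(t - k*1, 1)
        have hk1 : k * 1 = k := by ring
        have e1 : t - (s+1) + 1 - 1 = t - s - 1 := by omega
        have e2 : t - k * 1 = t - s := by omega
        rw [e1, e2]
        have e3 : t - s = (t - s - 1) + 1 := by omega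
        rw [e3, Nat.choose_one_right, Nat.choose_one_right]
        push_cast
        ring
      · have hIH := IH j' (by
          have h1 : (k+1)*(j'+1) = (k+1)*j' + (k+1) := by ring
          omega) (by omega)
        rw [hIH]
        -- Pascal
        have hu : 1 ≤ t - s := by omega
        have hP := Nat.choose_succ_succ (t - s + j' - 1) j'
        simp only [Nat.succ_eq_add_one] at hP
        have e1 : t - s + j' - 1 + 1 = t - s + j' := by omega
        rw [e1] at hP
        have e2 : t - (s+1) + (j'+1) - 1 = t - s + j' - 1 := by omega
        have e3 : t - s + (j'+1) - 1 = t - s + j' := by omega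
        have e4 : t - k*(j'+1) = t - s + j' := by
          have h1 : (k+1)*(j'+1) = k*(j'+1) + (j'+1) := by ring
          omega
        rw [e2, e4]
        have e5 : t - s + j' - 1 = t - s - 1 + j' := by omega
        have hPR : ((t - s + j').choose (j'+1) : ℝ)
            = ((t - s + j' - 1).choose j' : ℝ) + ((t - s + j' - 1).choose (j'+1) : ℝ) := by
          exact_mod_cast congrArg (fun z : ℕ => (z:ℝ)) hP
        push_cast [pow_succ] at hPR ⊢
        linear_combination (-(-1:ℝ)^j') * hPR
    · -- interior
      have hj'le : (k+1) * (j'+1) ≤ s := by omega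
      have hIH1 := IH (j'+1) hj'le (by omega)
      have hIH2 := IH j' (by
          have h1 : (k+1)*(j'+1) = (k+1)*j' + (k+1) := by ring
          omega) (by omega)
      rw [hIH1, hIH2, if_neg (by omega)]
      have hu : 1 ≤ t - s := by omega
      have hP := Nat.choose_succ_succ (t - s + j' - 1) j'
      simp only [Nat.succ_eq_add_one] at hP
      have e1 : t - s + j' - 1 + 1 = t - s + j' := by omega
      rw [e1] at hP
      have e2 : t - (s+1) + (j'+1) - 1 = t - s + j' - 1 := by omega
      have e3 : t - s + (j'+1) - 1 = t - s + j' := by omega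
      rw [e2, e3]
      have hPR : ((t - s + j').choose (j'+1) : ℝ)
          = ((t - s + j' - 1).choose j' : ℝ) + ((t - s + j' - 1).choose (j'+1) : ℝ) := by
        exact_mod_cast congrArg (fun z : ℕ => (z:ℝ)) hP
      push_cast [pow_succ] at hPR ⊢
      linear_combination (-(-1:ℝ)^j') * hPR

noncomputable def Rp (k t : ℕ) (L : ℕ) (c : ℤ) : ℝ :=
  ∑ ℓ ∈ Finset.range (t / k + 1),
    (-1:ℝ)^ℓ * ((t - k*ℓ).choose ℓ : ℝ) * phi k ((L:ℤ) + t - ((k:ℤ)+1)*ℓ) (c + t)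

lemma Rp_negB (k t : ℕ) (L : ℕ) (c : ℤ) (h : c + t < 0) : Rp k t L c = 0 := by
  apply Finset.sum_eq_zero
  intro ℓ _
  rw [phi_neg_B h, mul_zero]

lemma Rp_base (k t : ℕ) (hk : 0 < k) (c : ℤ) (hc : -(t:ℤ) ≤ c) :
    Rp k t 0 c = if c = 0 then 1 else 0 := by
  by_cases hc0 : c = 0
  · subst hc0
    rw [if_pos rfl]
    have : Rp k t 0 0 = Xs k t t 0 := by
      apply Finset.sum_congr rfl
      intro ℓ _
      congr 2 <;> (push_cast; ring)
    rw [this, Xs_zero_right]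
  rw [if_neg hc0]
  rcases lt_or_gt_of_ne hc0 with hneg | hpos
  swap
  · apply Finset.sum_eq_zero
    intro ℓ _
    rw [phi_gt, mul_zero]
    have h1 : (0:ℤ) ≤ ((k:ℤ)+1) * ℓ := by positivity
    push_cast
    linarith
  by_cases hdvd : ((k:ℤ)+1) ∣ c
  swap
  · apply Finset.sum_eq_zero
    intro ℓ _
    rw [phi_not_dvd, mul_zero]
    rintro ⟨e, he⟩
    apply hdvd
    refine ⟨-(ℓ:ℤ) - e, ?_⟩
    have h5 : ((0:ℕ):ℤ) + t - ((k:ℤ)+1)*ℓ - (c + t) = ((k:ℤ)+1) * e := he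
    linear_combination -h5
  · obtain ⟨m, hm⟩ := hdvd
    have hm0 : m < 0 := by
      by_contra h
      push_neg at h
      nlinarith [mul_nonneg (show (0:ℤ) ≤ (k:ℤ)+1 by positivity) h]
    obtain ⟨j, hj⟩ : ∃ j : ℕ, (j:ℤ) = -m := ⟨(-m).toNat, by omega⟩
    have hcj : c = -(((k:ℤ)+1) * j) := by rw [hj]; rw [hm]; ring
    have hjt : (k+1) * j ≤ t := by
      have h1 : ((k:ℤ)+1) * j ≤ t := by rw [hcj] at hc; linarith
      exact_mod_cast h1
    have heq : Rp k t 0 c = Xs k t t j := by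
      apply Finset.sum_congr rfl
      intro ℓ _
      rw [hcj]
      congr 2 <;> (push_cast; ring)
    rw [heq, Xs_formula k t hk t j hjt le_rfl]
    have hj1 : 1 ≤ j := by
      rcases Nat.eq_zero_or_pos j with h | h
      · exfalso; rw [h] at hcj; simp at hcj; omega
      · exact h
    have : t - t + j - 1 = j - 1 := by omega
    rw [this, Nat.choose_eq_zero_of_lt (by omega)]
    simp

lemma Rp_succ (k t : ℕ) (hk : 0 < k) (L : ℕ) (c : ℤ) (hc : -(t:ℤ) ≤ c) :
    Rp k t (L+1) c = Rp k t L (c-1) + Rp k t L (c+k) := by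
  have hterm : ∀ ℓ ∈ Finset.range (t / k + 1),
      (-1:ℝ)^ℓ * ((t - k*ℓ).choose ℓ : ℝ) * phi k (((L+1:ℕ):ℤ) + t - ((k:ℤ)+1)*ℓ) (c + t)
      = (-1:ℝ)^ℓ * ((t - k*ℓ).choose ℓ : ℝ) * phi k ((L:ℤ) + t - ((k:ℤ)+1)*ℓ) ((c-1) + t)
      + (-1:ℝ)^ℓ * ((t - k*ℓ).choose ℓ : ℝ) * phi k ((L:ℤ) + t - ((k:ℤ)+1)*ℓ) ((c+k) + t) := by
    intro ℓ hℓ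
    have hℓk : k * ℓ ≤ t := by
      have h1 : ℓ ≤ t / k := Nat.lt_succ_iff.mp (Finset.mem_range.mp hℓ)
      have := Nat.div_mul_le_self t k
      calc k * ℓ = ℓ * k := by ring
        _ ≤ (t/k) * k := Nat.mul_le_mul_right k h1
        _ ≤ t := Nat.div_mul_le_self t k
    have hp := phi_pascal (k := k) hk (((L+1:ℕ):ℤ) + t - ((k:ℤ)+1)*ℓ) (c + t) (by linarith)
    have e1 : ((L+1:ℕ):ℤ) + t - ((k:ℤ)+1)*ℓ - 1 = (L:ℤ) + t - ((k:ℤ)+1)*ℓ := by push_cast; ring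
    have e2 : c + t - 1 = (c-1) + t := by ring
    have e3 : c + t + k = (c+k) + t := by ring
    rw [e1, e2, e3] at hp
    rw [hp]
    by_cases hcond : ((L+1:ℕ):ℤ) + t - ((k:ℤ)+1)*ℓ = 0 ∧ c + t = 0
    · have hz : ((t - k*ℓ).choose ℓ : ℝ) = 0 := by
        obtain ⟨h1, -⟩ := hcond
        have h2 : ((k:ℤ)+1) * ℓ = (L+1:ℕ) + t := by push_cast at h1 ⊢; linarith
        have h3 : ((k+1) * ℓ : ℕ) = (L+1) + t := by exact_mod_cast h2
        have h4 : (k+1)*ℓ = k*ℓ + ℓ := by ring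
        rw [Nat.choose_eq_zero_of_lt (by omega)]
        simp
      rw [if_pos hcond, hz]
      ring
    · rw [if_neg hcond]
      ring
  rw [Rp, Finset.sum_congr rfl hterm, Finset.sum_add_distrib]
  rfl

def stp (k : ℕ) (b : Bool) : ℤ := if b then (1:ℤ) else -(k:ℤ)

def pathCount (k t L : ℕ) (c : ℤ) : ℕ :=
  (Finset.univ.filter (fun f : Fin L → Bool =>
    (∀ i : Fin L, -(t : ℤ) ≤ ∑ j ∈ Finset.univ.filter (· ≤ i), stp k (f j)) ∧
    (∑ j, stp k (f j)) = c)).card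

lemma pathCount_zero (k t : ℕ) (c : ℤ) : pathCount k t 0 c = if c = 0 then 1 else 0 := by
  rw [pathCount]
  have hP : ∀ f : Fin 0 → Bool,
      ((∀ i : Fin 0, -(t : ℤ) ≤ ∑ j ∈ Finset.univ.filter (· ≤ i), stp k (f j)) ∧
        (∑ j, stp k (f j)) = c) ↔ c = 0 := by
    intro f
    constructor
    · rintro ⟨-, h⟩
      rw [← h]
      simp
    · intro h
      exact ⟨fun i => i.elim0, by simp [h]⟩
  rw [Finset.filter_congr (fun f _ => hP f)]
  by_cases h : c = 0
  · rw [if_pos h]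
    rw [Finset.filter_true_of_mem (fun f _ => h)]
    simp
  · rw [if_neg h]
    rw [Finset.filter_false_of_mem (fun f _ => h)]
    simp

lemma psum_castSucc (k : ℕ) {L : ℕ} (f : Fin (L+1) → Bool) (i' : Fin L) :
    ∑ j ∈ Finset.univ.filter (· ≤ i'.castSucc), stp k (f j)
      = ∑ j ∈ Finset.univ.filter (· ≤ i'), stp k (Fin.init f j) := by
  rw [Finset.sum_filter, Finset.sum_filter, Fin.sum_univ_castSucc]
  rw [if_neg (by exact not_le.mpr (Fin.castSucc_lt_last i'))]
  rw [add_zero]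
  apply Finset.sum_congr rfl
  intro j _
  by_cases h : j ≤ i'
  · rw [if_pos (Fin.castSucc_le_castSucc_iff.mpr h), if_pos h]
    rfl
  · rw [if_neg (fun hc => h (Fin.castSucc_le_castSucc_iff.mp hc)), if_neg h]

lemma psum_last (k : ℕ) {L : ℕ} (f : Fin (L+1) → Bool) :
    ∑ j ∈ Finset.univ.filter (· ≤ Fin.last L), stp k (f j) = ∑ j, stp k (f j) := by
  rw [Finset.filter_true_of_mem (fun j _ => Fin.le_last j)]

lemma tsum_snoc (k : ℕ) {L : ℕ} (f : Fin (L+1) → Bool) :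
    ∑ j, stp k (f j) = (∑ j, stp k (Fin.init f j)) + stp k (f (Fin.last L)) := by
  rw [Fin.sum_univ_castSucc]
  rfl

lemma pathCount_succ (k t L : ℕ) (c : ℤ) :
    pathCount k t (L+1) c =
      if -(t:ℤ) ≤ c then pathCount k t L (c-1) + pathCount k t L (c+k) else 0 := by
  by_cases hc : -(t:ℤ) ≤ c
  swap
  · rw [if_neg hc, pathCount, Finset.card_eq_zero.mpr]
    rw [Finset.filter_eq_empty_iff]
    rintro f - ⟨h1, h2⟩
    apply hc
    rw [← h2, ← psum_last k f]
    exact h1 (Fin.last L)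
  rw [if_pos hc]
  -- card of fiber with given last letter
  have fiber : ∀ b : Bool,
      (Finset.univ.filter (fun f : Fin (L+1) → Bool =>
        ((∀ i : Fin (L+1), -(t : ℤ) ≤ ∑ j ∈ Finset.univ.filter (· ≤ i), stp k (f j)) ∧
          (∑ j, stp k (f j)) = c) ∧ f (Fin.last L) = b)).card
        = pathCount k t L (c - stp k b) := by
    intro b
    rw [pathCount]
    refine Finset.card_bij' (fun f _ => Fin.init f) (fun g _ => Fin.snoc g b)
      ?hi ?hj ?hleft ?hright
    case hi =>
      intro f hf
      simp only [Finset.mem_filter, Finset.mem_univ, true_and] at hf ⊢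
      obtain ⟨⟨h1, h2⟩, h3⟩ := id hf
      constructor
      · intro i'
        rw [← psum_castSucc k f i']
        exact h1 i'.castSucc
      · have htot := tsum_snoc k f
        rw [h2, h3] at htot
        linarith [htot]
    case hj =>
      intro g hg
      simp only [Finset.mem_filter, Finset.mem_univ, true_and] at hg ⊢
      obtain ⟨h1, h2⟩ := id hg
      set F : Fin (L+1) → Bool := Fin.snoc g b with hF
      have hlast : F (Fin.last L) = b := by simp [hF]
      have hinit : Fin.init F = g := by simp [hF]
      have htot : (∑ j, stp k (F j)) = c := by
        rw [tsum_snoc k F, hinit, hlast, h2]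
        ring
      refine ⟨⟨?_, htot⟩, hlast⟩
      intro i
      induction i using Fin.lastCases with
      | last =>
        rw [psum_last k F, htot]
        exact hc
      | cast i' =>
        rw [psum_castSucc k F i', hinit]
        exact h1 i'
    case hleft =>
      intro f hf
      simp only [Finset.mem_filter, Finset.mem_univ, true_and] at hf
      have h3 : f (Fin.last L) = b := hf.2
      subst h3
      exact Fin.snoc_init_self f
    case hright =>
      intro g hg
      simp
  -- split by last letter
  have hsplit : (Finset.univ.filter (fun f : Fin (L+1) → Bool =>
      (∀ i : Fin (L+1), -(t : ℤ) ≤ ∑ j ∈ Finset.univ.filter (· ≤ i), stp k (f j)) ∧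
        (∑ j, stp k (f j)) = c)).card
      = (Finset.univ.filter (fun f : Fin (L+1) → Bool =>
          ((∀ i : Fin (L+1), -(t : ℤ) ≤ ∑ j ∈ Finset.univ.filter (· ≤ i), stp k (f j)) ∧
            (∑ j, stp k (f j)) = c) ∧ f (Fin.last L) = true)).card
        + (Finset.univ.filter (fun f : Fin (L+1) → Bool =>
          ((∀ i : Fin (L+1), -(t : ℤ) ≤ ∑ j ∈ Finset.univ.filter (· ≤ i), stp k (f j)) ∧
            (∑ j, stp k (f j)) = c) ∧ f (Fin.last L) = false)).card := by
    rw [← Finset.card_union_of_disjoint]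
    · congr 1
      rw [← Finset.filter_or]
      apply Finset.filter_congr
      intro f _
      constructor
      · intro h
        rcases Bool.eq_false_or_eq_true (f (Fin.last L)) with hb | hb
        · exact Or.inl ⟨h, hb⟩
        · exact Or.inr ⟨h, hb⟩
      · rintro (⟨h, -⟩ | ⟨h, -⟩) <;> exact h
    · rw [Finset.disjoint_filter]
      rintro f - ⟨-, h1⟩ ⟨-, h2⟩
      rw [h1] at h2
      exact Bool.noConfusion h2
  rw [pathCount, hsplit, fiber true, fiber false]
  have e1 : c - stp k true = c - 1 := by simp [stp]
  have e2 : c - stp k false = c + k := by simp [stp, sub_neg_eq_add]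
  rw [e1, e2]

lemma pathCount_below (k t : ℕ) (L : ℕ) (c : ℤ) (h : c < -(t:ℤ)) : pathCount k t L c = 0 := by
  cases L with
  | zero =>
    rw [pathCount_zero, if_neg (by omega)]
  | succ L =>
    rw [pathCount_succ, if_neg (by omega)]

lemma master (k t : ℕ) (hk : 0 < k) :
    ∀ L : ℕ, ∀ c : ℤ, -(t:ℤ) ≤ c → (pathCount k t L c : ℝ) = Rp k t L c := by
  intro L
  induction L with
  | zero =>
    intro c hc
    rw [pathCount_zero, Rp_base k t hk c hc]
    by_cases h : c = 0 <;> simp [h]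
  | succ L IH =>
    intro c hc
    rw [pathCount_succ, if_pos hc, Rp_succ k t hk L c hc]
    push_cast
    congr 1
    · by_cases h : -(t:ℤ) ≤ c - 1
      · exact IH (c-1) h
      · rw [pathCount_below k t L (c-1) (by omega), Rp_negB k t L (c-1) (by omega)]
        simp
    · exact IH (c + k) (by omega)

lemma ktDyck_eq_pathCount (k t L : ℕ) : ktDyckCount k t L = pathCount k t L 0 := rfl

noncomputable def aa (k t m : ℕ) : ℝ :=
  (((t : ℝ) + 1) / (((k:ℝ) + 1) * m + t + 1)) * ((((k + 1) * m + t + 1).choose m : ℕ) : ℝ)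

lemma aa_pos (k t m : ℕ) : 0 < aa k t m := by
  have h1 : (0:ℝ) < (t:ℝ) + 1 := by positivity
  have h2 : (0:ℝ) < ((k:ℝ) + 1) * m + t + 1 := by positivity
  have h3 : 0 < ((k + 1) * m + t + 1).choose m := Nat.choose_pos (by nlinarith [Nat.zero_le ((k+1)*m), Nat.le_mul_of_pos_left m (Nat.succ_pos k)])
  have h4 : (0:ℝ) < (((k + 1) * m + t + 1).choose m : ℝ) := by exact_mod_cast h3
  exact mul_pos (div_pos h1 h2) h4

lemma phi_aa (k t m : ℕ) : phi k ((((k + 1) * m + t : ℕ) : ℤ)) ((t:ℤ)) = aa k t m := by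
  have hd : ((((k+1)*m + t : ℕ) : ℤ)) - (t:ℤ) = ((k:ℤ) + 1) * m := by push_cast; ring
  rw [phi_eval (by positivity) (by exact_mod_cast Nat.le_add_left t ((k+1)*m)) hd]
  have h1 : (((((k+1)*m + t : ℕ) : ℤ)) + 1).toNat = (k+1)*m + t + 1 := by omega
  have h2 : ((m:ℤ)).toNat = m := by omega
  rw [h1, h2, aa]
  congr 1
  push_cast
  ring

lemma count_eval (k t : ℕ) (hk : 0 < k) (n : ℕ) (hn : t / k ≤ n) :
    (ktDyckCount k t ((k + 1) * n) : ℝ)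
      = ∑ ℓ ∈ Finset.range (t / k + 1),
          (-1:ℝ)^ℓ * ((t - k*ℓ).choose ℓ : ℝ) * aa k t (n - ℓ) := by
  rw [ktDyck_eq_pathCount, master k t hk ((k+1)*n) 0 (by omega), Rp]
  apply Finset.sum_congr rfl
  intro ℓ hℓ
  have hℓn : ℓ ≤ n := le_trans (Nat.lt_succ_iff.mp (Finset.mem_range.mp hℓ)) hn
  congr 1
  have harg : (((k+1)*n : ℕ) : ℤ) + t - ((k:ℤ)+1)*ℓ = (((k + 1) * (n - ℓ) + t : ℕ) : ℤ) := by
    push_cast [Nat.cast_sub hℓn]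
    ring
  rw [harg, show (0:ℤ) + t = (t:ℤ) from by ring, phi_aa]

lemma fact_prod (a b : ℕ) :
    (((a + b).factorial : ℕ) : ℝ) = ((a.factorial : ℕ) : ℝ) * ∏ i ∈ Finset.range b, ((a:ℝ) + 1 + i) := by
  induction b with
  | zero => simp
  | succ b IH =>
    rw [show a + (b+1) = (a+b) + 1 from by ring, Nat.factorial_succ, Finset.prod_range_succ]
    push_cast
    rw [IH]
    push_cast
    ring

lemma lin_div_lin (a b c d : ℝ) (hc : 0 < c) (hd : 0 ≤ d) :
    Filter.Tendsto (fun n : ℕ => (a*n+b)/(c*n+d)) Filter.atTop (nhds (a/c)) := by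
  have h0 : Filter.Tendsto (fun n : ℕ => (1:ℝ)/n) Filter.atTop (nhds 0) :=
    tendsto_one_div_atTop_nhds_zero_nat
  have h1 : Filter.Tendsto (fun n : ℕ => (a + b*(1/n))/(c + d*(1/n))) Filter.atTop (nhds (a/c)) := by
    have hnum : Filter.Tendsto (fun n : ℕ => a + b*(1/n)) Filter.atTop (nhds a) := by
      have := (h0.const_mul b).const_add a
      simpa using this
    have hden : Filter.Tendsto (fun n : ℕ => c + d*(1/n)) Filter.atTop (nhds c) := by
      have := (h0.const_mul d).const_add c
      simpa using this
    exact hnum.div hden hc.ne'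
  apply h1.congr'
  filter_upwards [Filter.eventually_ge_atTop 1] with n hn
  have hn0 : (0:ℝ) < (n:ℝ) := by exact_mod_cast hn
  have hden1 : (0:ℝ) < c * n + d := by nlinarith
  have hden2 : (0:ℝ) < c + d*(1/n) := by
    have : c + d*(1/n) = (c*n+d)/n := by field_simp
    rw [this]
    positivity
  rw [div_eq_div_iff hden2.ne' hden1.ne']
  field_simp
  try ring

lemma ratio_eq (k t : ℕ) (n : ℕ) :
    aa k t n / aa k t (n+1)
      = (((k:ℝ)+1)*n + t + 1 + (k+1)) / (((k:ℝ)+1)*n + t + 1)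
        * (((n:ℝ)+1) / (((k:ℝ)+1)*n + t + 2))
        * ∏ i ∈ Finset.range k, (((k:ℝ)*n + t + 2 + i) / (((k:ℝ)+1)*n + t + 3 + i)) := by
  have hx : (k+1)*n = k*n + n := by ring
  have e1 : (k+1)*(n+1)+t+1 = ((k+1)*n+t+1) + (k+1) := by ring
  have hn1 : n ≤ (k+1)*n+t+1 := by omega
  have hn2 : n+1 ≤ ((k+1)*n+t+1)+(k+1) := by omega
  have hMn : ((k+1)*n+t+1) - n = k*n+t+1 := by omega
  have hMn2 : (((k+1)*n+t+1) + (k+1)) - (n+1) = (k*n+t+1) + k := by omega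
  have hc1 := Nat.cast_choose ℝ hn1
  rw [hMn] at hc1
  have hc2 := Nat.cast_choose ℝ hn2
  rw [hMn2] at hc2
  have hp1 : ∏ i ∈ Finset.range (k+1), ((((k+1)*n+t+1 : ℕ):ℝ)+1+(i:ℝ))
      = (((k:ℝ)+1)*n+t+2) * ∏ i ∈ Finset.range k, (((k:ℝ)+1)*n+t+3+i) := by
    rw [Finset.prod_range_succ']
    rw [mul_comm]
    congr 1
    · push_cast; ring
    · apply Finset.prod_congr rfl
      intro i _
      push_cast
      ring
  have hp2 : ∏ i ∈ Finset.range k, (((k*n+t+1 : ℕ):ℝ)+1+(i:ℝ))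
      = ∏ i ∈ Finset.range k, ((k:ℝ)*n+t+2+i) := by
    apply Finset.prod_congr rfl
    intro i _
    push_cast
    ring
  have hf1 := fact_prod ((k+1)*n+t+1) (k+1)
  rw [hp1] at hf1
  have hf2 := fact_prod (k*n+t+1) k
  rw [hp2] at hf2
  rw [aa, aa, e1, hc1, hc2, hf1, hf2]
  have hfs : ((n+1).factorial : ℝ) = (n.factorial : ℝ) * ((n:ℝ)+1) := by
    rw [Nat.factorial_succ]; push_cast; ring
  rw [hfs, Finset.prod_div_distrib]
  have nz1 : ((n.factorial : ℕ):ℝ) ≠ 0 := by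
    exact_mod_cast Nat.factorial_ne_zero n
  have nz2 : (((k*n+t+1).factorial : ℕ):ℝ) ≠ 0 := by
    exact_mod_cast Nat.factorial_ne_zero _
  have nz3 : ((((k+1)*n+t+1).factorial : ℕ):ℝ) ≠ 0 := by
    exact_mod_cast Nat.factorial_ne_zero _
  have nz4 : (((k:ℝ)+1)*n+t+1) ≠ 0 := by positivity
  have nz5 : (((k:ℝ)+1)*n+t+2) ≠ 0 := by positivity
  have nz6 : ((t:ℝ)+1) ≠ 0 := by positivity
  have nz7 : (0:ℝ) < ∏ i ∈ Finset.range k, (((k:ℝ)+1)*n+t+3+i) := by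
    apply Finset.prod_pos
    intro i _
    positivity
  have nz8 : (0:ℝ) < ∏ i ∈ Finset.range k, ((k:ℝ)*n+t+2+i) := by
    apply Finset.prod_pos
    intro i _
    positivity
  have nz9 : ((n:ℝ)+1) ≠ 0 := by positivity
  have nzA : (((k:ℝ)+1)*(n+1)+t+1) ≠ 0 := by positivity
  push_cast
  field_simp
  ring

lemma ratio_tendsto (k t : ℕ) (hk : 0 < k) :
    Filter.Tendsto (fun n : ℕ => aa k t n / aa k t (n+1)) Filter.atTop
      (nhds ((k:ℝ)^k / ((k:ℝ)+1)^(k+1))) := by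
  have hk1 : (0:ℝ) < (k:ℝ) + 1 := by positivity
  have h1 : Filter.Tendsto (fun n : ℕ => (((k:ℝ)+1)*n + t + 1 + (k+1)) / (((k:ℝ)+1)*n + t + 1))
      Filter.atTop (nhds 1) := by
    have := lin_div_lin ((k:ℝ)+1) ((t:ℝ)+1+(k+1)) ((k:ℝ)+1) ((t:ℝ)+1) hk1 (by positivity)
    rw [div_self hk1.ne'] at this
    apply this.congr
    intro n
    ring_nf
  have h2 : Filter.Tendsto (fun n : ℕ => ((n:ℝ)+1) / (((k:ℝ)+1)*n + t + 2))
      Filter.atTop (nhds (1/((k:ℝ)+1))) := by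
    have := lin_div_lin 1 1 ((k:ℝ)+1) ((t:ℝ)+2) hk1 (by positivity)
    apply this.congr
    intro n
    ring_nf
  have h3 : Filter.Tendsto (fun n : ℕ => ∏ i ∈ Finset.range k,
        (((k:ℝ)*n + t + 2 + i) / (((k:ℝ)+1)*n + t + 3 + i)))
      Filter.atTop (nhds (((k:ℝ)/((k:ℝ)+1))^k)) := by
    have hprod : Filter.Tendsto (fun n : ℕ => ∏ i ∈ Finset.range k,
        (((k:ℝ)*n + t + 2 + i) / (((k:ℝ)+1)*n + t + 3 + i)))
        Filter.atTop (nhds (∏ _i ∈ Finset.range k, ((k:ℝ)/((k:ℝ)+1)))) := by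
      apply tendsto_finset_prod
      intro i _
      have := lin_div_lin ((k:ℝ)) ((t:ℝ)+2+i) ((k:ℝ)+1) ((t:ℝ)+3+i)
        (by positivity) (by positivity)
      apply this.congr
      intro n
      ring_nf
    rwa [Finset.prod_const, Finset.card_range] at hprod
  have hmul := (h1.mul h2).mul h3
  have hval : (1 * (1/((k:ℝ)+1))) * (((k:ℝ)/((k:ℝ)+1))^k) = (k:ℝ)^k / ((k:ℝ)+1)^(k+1) := by
    rw [div_pow]
    field_simp
    ring
  rw [hval] at hmul
  apply hmul.congr
  intro n
  exact (ratio_eq k t n).symm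

lemma shift_tendsto (k t : ℕ) (hk : 0 < k) (ℓ : ℕ) :
    Filter.Tendsto (fun n : ℕ => aa k t (n - ℓ) / aa k t n) Filter.atTop
      (nhds (((k:ℝ)^k / ((k:ℝ)+1)^(k+1))^ℓ)) := by
  induction ℓ with
  | zero =>
    simp only [Nat.sub_zero, pow_zero]
    have : ∀ n : ℕ, aa k t n / aa k t n = 1 := fun n => div_self (aa_pos k t n).ne'
    rw [show (fun n : ℕ => aa k t n / aa k t n) = (fun _ : ℕ => (1:ℝ)) from funext this]
    exact tendsto_const_nhds
  | succ ℓ IH =>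
    have hsub : Filter.Tendsto (fun n : ℕ => n - (ℓ+1)) Filter.atTop Filter.atTop :=
      Filter.tendsto_sub_atTop_nat (ℓ+1)
    have hcomp : Filter.Tendsto (fun n : ℕ => aa k t (n - (ℓ+1)) / aa k t (n - ℓ))
        Filter.atTop (nhds ((k:ℝ)^k / ((k:ℝ)+1)^(k+1))) := by
      have hC := (ratio_tendsto k t hk).comp hsub
      apply hC.congr'
      filter_upwards [Filter.eventually_ge_atTop (ℓ+1)] with n hn
      have he : n - (ℓ+1) + 1 = n - ℓ := by omega
      simp only [Function.comp_apply, he]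
    have hmul := hcomp.mul IH
    rw [← pow_succ'] at hmul
    apply hmul.congr'
    filter_upwards [Filter.eventually_ge_atTop (ℓ+1)] with n hn
    have hy : aa k t (n - ℓ) ≠ 0 := (aa_pos k t (n-ℓ)).ne'
    field_simp

/-- As `n → ∞`, the ratio of the number of `k_t`-Dyck paths of length `(k+1)n` to
`((t+1)/((k+1)n+t+1)) binom((k+1)n+t+1, n)` tends to
`∑_{0 ≤ ℓ ≤ t/k} binom(t-kℓ, ℓ) (-ρ)^ℓ` with `ρ = k^k/(k+1)^(k+1)`. -/
theorem stmt_13 (k t : ℕ) (hk : 0 < k) :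
    Tendsto (fun n : ℕ =>
        (ktDyckCount k t ((k + 1) * n) : ℝ) /
          ((((t : ℝ) + 1) / ((k + 1) * n + t + 1)) * (((k + 1) * n + t + 1).choose n)))
      atTop
      (nhds (∑ ℓ ∈ Finset.range (t / k + 1),
        ((t - k * ℓ).choose ℓ : ℝ) * (-((k : ℝ) ^ k / (k + 1) ^ (k + 1))) ^ ℓ)) := by
  have h0 : Tendsto (fun n : ℕ => ∑ ℓ ∈ Finset.range (t/k+1),
      ((-1:ℝ)^ℓ * ((t - k*ℓ).choose ℓ : ℝ)) * (aa k t (n-ℓ) / aa k t n)) atTop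
      (nhds (∑ ℓ ∈ Finset.range (t/k+1),
        ((-1:ℝ)^ℓ * ((t - k*ℓ).choose ℓ : ℝ)) * ((k:ℝ)^k / ((k:ℝ)+1)^(k+1))^ℓ)) := by
    apply tendsto_finset_sum
    intro ℓ _
    exact (shift_tendsto k t hk ℓ).const_mul _
  have he : ∑ ℓ ∈ Finset.range (t/k+1),
      ((-1:ℝ)^ℓ * ((t - k*ℓ).choose ℓ : ℝ)) * ((k:ℝ)^k / ((k:ℝ)+1)^(k+1))^ℓ
      = ∑ ℓ ∈ Finset.range (t / k + 1),
        ((t - k * ℓ).choose ℓ : ℝ) * (-((k : ℝ) ^ k / (k + 1) ^ (k + 1))) ^ ℓ := by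
    apply Finset.sum_congr rfl
    intro ℓ _
    rw [neg_pow]
    ring
  rw [he] at h0
  apply h0.congr'
  filter_upwards [Filter.eventually_ge_atTop (t/k)] with n hn
  have hden : (((t : ℝ) + 1) / ((k + 1) * n + t + 1)) * ((((k + 1) * n + t + 1).choose n : ℕ) : ℝ)
      = aa k t n := rfl
  rw [hden, count_eval k t hk n hn, Finset.sum_div]
  apply Finset.sum_congr rfl
  intro ℓ _
  rw [mul_div_assoc]
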